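/- Let R ∈ ℝ^{s×s} be upper triangular with entries satisfying |r_{jk}| ≤ C_j M_{j-1} (ΔT)^{j-1} for k ≥ j, where C_j, M_{j-1} ≥ 0 are constants and 0 < ΔT. Then the (j+1)-th largest singular value of R satisfies σ_{j+1} ≤ √(s−j) · √(‖R_j‖_1 ‖R_j‖_∞) where R_j is R with the first j rows removed, and in particular σ_{j+1} ≤ √(s−j) · (s) · max_{i>j} C_i M_{i-1} (ΔT)^{i-1}. -/

import Mathlib

/-- The spectral norm (largest singular value) of a real matrix,
realized as the operator norm of the induced map between Euclidean spaces. -/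
noncomputable def spectralNorm' {m n : ℕ} (A : Matrix (Fin m) (Fin n) ℝ) : ℝ :=
  ‖LinearMap.toContinuousLinearMap (Matrix.toEuclideanLin A)‖

/-- `singularValue A k` is the `(k+1)`-th largest singular value of `A`
(`k` is 0-indexed, so `singularValue A 0 = σ_1` is the largest one):
the square roots of the eigenvalues of `Aᴴ * A`, sorted in decreasing order. -/
noncomputable def singularValue {m n : ℕ} (A : Matrix (Fin m) (Fin n) ℝ) (k : Fin n) : ℝ :=
  Real.sqrt ((Matrix.isHermitian_conjTranspose_mul_self A).eigenvalues
    (Tuple.sort (Matrix.isHermitian_conjTranspose_mul_self A).eigenvalues k.rev))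


/-- `‖A‖_1`: the maximum absolute column sum of a real matrix. -/
noncomputable def colSumNorm {m n : ℕ} (A : Matrix (Fin m) (Fin n) ℝ) : ℝ :=
  ⨆ j : Fin n, ∑ i : Fin m, |A i j|

/-- `‖A‖_∞`: the maximum absolute row sum of a real matrix. -/
noncomputable def rowSumNorm {m n : ℕ} (A : Matrix (Fin m) (Fin n) ℝ) : ℝ :=
  ⨆ i : Fin m, ∑ j : Fin n, |A i j|

open Matrix

lemma key_exists (s j : ℕ) (hj : j < s) (R : Matrix (Fin s) (Fin s) ℝ) :
    ∃ x : EuclideanSpace ℝ (Fin s), x ≠ 0 ∧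
      (∀ u : Fin s, (u : ℕ) < j → (R *ᵥ (x : Fin s → ℝ)) u = 0) ∧
      ((Matrix.isHermitian_conjTranspose_mul_self R).eigenvalues
          (Tuple.sort (Matrix.isHermitian_conjTranspose_mul_self R).eigenvalues
            (⟨j, hj⟩ : Fin s).rev)) * ((x : Fin s → ℝ) ⬝ᵥ (x : Fin s → ℝ)) ≤
        (R *ᵥ (x : Fin s → ℝ)) ⬝ᵥ (R *ᵥ (x : Fin s → ℝ)) := by
  set A := Rᴴ * R with hAdef
  have hA : A.IsHermitian := Matrix.isHermitian_conjTranspose_mul_self R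
  set σ := Tuple.sort hA.eigenvalues with hσ
  set r : Fin s := (⟨j, hj⟩ : Fin s).rev with hr
  set lam : ℝ := hA.eigenvalues (σ r) with hlam
  set v := hA.eigenvectorBasis with hv
  set T : Finset (Fin s) := Finset.Ici r with hT
  set S : Finset (Fin s) := T.image σ with hS
  have hcardT : T.card = j + 1 := by
    simp only [hT, Fin.card_Ici, hr, Fin.val_rev]
    omega
  have hcardS : S.card = j + 1 := by
    rw [hS, Finset.card_image_of_injective _ σ.injective, hcardT]
  -- eigenvalues at S are ≥ lam
  have hge : ∀ i ∈ S, lam ≤ hA.eigenvalues i := by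
    intro i hi
    rw [hS, Finset.mem_image] at hi
    obtain ⟨m, hm, rfl⟩ := hi
    rw [hT, Finset.mem_Ici] at hm
    exact Tuple.monotone_sort hA.eigenvalues hm
  -- the span of eigenvectors at S
  set W : Submodule ℝ (EuclideanSpace ℝ (Fin s)) := Submodule.span ℝ (v '' ↑S) with hW
  have hli : LinearIndependent ℝ (fun i : {i // i ∈ S} => v i) :=
    (hA.eigenvectorBasis.orthonormal.linearIndependent).comp _ Subtype.val_injective
  have hrange : Set.range (fun i : {i // i ∈ S} => v i) = v '' ↑S := by
    ext y; simp [Set.range, Set.mem_image]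
  have hfinW : Module.finrank ℝ W = j + 1 := by
    rw [hW, ← hrange, finrank_span_eq_card hli, Fintype.card_coe, hcardS]
  -- the linear map to first j coordinates of R *ᵥ x
  set L : EuclideanSpace ℝ (Fin s) →ₗ[ℝ] (Fin j → ℝ) :=
    (LinearMap.pi fun t : Fin j =>
        (LinearMap.proj (Fin.castLE hj.le t)).comp R.mulVecLin).comp
      (WithLp.linearEquiv 2 ℝ (Fin s → ℝ)).toLinearMap with hL
  set L' : W →ₗ[ℝ] (Fin j → ℝ) := L.comp W.subtype with hL'
  have hninj : ¬ Function.Injective L' := by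
    intro h
    have := LinearMap.finrank_le_finrank_of_injective h
    rw [hfinW] at this
    simp [Module.finrank_pi] at this
  rw [Function.not_injective_iff] at hninj
  obtain ⟨a, b, hab, hne⟩ := hninj
  refine ⟨(a : EuclideanSpace ℝ (Fin s)) - b, ?_, ?_, ?_⟩
  · intro h
    apply hne
    have : (a : EuclideanSpace ℝ (Fin s)) = b := by
      rwa [sub_eq_zero] at h
    exact Subtype.ext this
  · intro u hu
    have h0 : L ((a : EuclideanSpace ℝ (Fin s)) - b) = 0 := by
      have : L' (a - b) = 0 := by rw [map_sub, hab, sub_self]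
      simpa [hL'] using this
    have := congrFun h0 ⟨u.1, hu⟩
    have hcast : Fin.castLE hj.le ⟨u.1, hu⟩ = u := by ext; rfl
    simpa [hL, hcast, Matrix.mulVecLin] using this
  · set x : EuclideanSpace ℝ (Fin s) := (a : EuclideanSpace ℝ (Fin s)) - b with hx
    have hxW : x ∈ W := sub_mem a.2 b.2
    set y : EuclideanSpace ℝ (Fin s) := WithLp.toLp 2 (A *ᵥ (x : Fin s → ℝ) : Fin s → ℝ) with hy
    set c : Fin s → ℝ := fun i => v.repr x i with hc
    have hdot : ∀ p q : EuclideanSpace ℝ (Fin s),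
        (p : Fin s → ℝ) ⬝ᵥ (q : Fin s → ℝ) = inner ℝ p q := by
      intro p q
      simp [dotProduct, PiLp.inner_apply, RCLike.inner_apply, mul_comm]
    have hAsymm : Aᵀ = A := by
      conv_rhs => rw [← hA.eq]
      rw [Matrix.conjTranspose_eq_transpose_of_trivial]
    have hc0 : ∀ i ∉ S, c i = 0 := by
      intro i hi
      show v.repr x i = 0
      rw [OrthonormalBasis.repr_apply_apply]
      have : ∀ z ∈ W, inner ℝ (v i) z = 0 := by
        intro z hz
        induction hz using Submodule.span_induction with
        | mem z hzmem =>
          obtain ⟨i', hi', rfl⟩ := hzmem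
          have hne : i ≠ i' := by rintro rfl; exact hi hi'
          exact hA.eigenvectorBasis.orthonormal.2 hne
        | zero => simp
        | add _ _ _ _ h1 h2 => rw [inner_add_right, h1, h2, add_zero]
        | smul t _ _ h1 => rw [inner_smul_right, h1, mul_zero]
      exact this x hxW
    have hrepr_y : ∀ i, v.repr y i = hA.eigenvalues i * c i := by
      intro i
      rw [OrthonormalBasis.repr_apply_apply, ← hdot]
      have step1 : (v i : Fin s → ℝ) ⬝ᵥ (y : Fin s → ℝ)
          = (Matrix.vecMul (v i : Fin s → ℝ) A) ⬝ᵥ (x : Fin s → ℝ) := by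
        rw [hy, WithLp.ofLp_toLp]
        exact Matrix.dotProduct_mulVec (v i : Fin s → ℝ) A (x : Fin s → ℝ)
      have step2 : Matrix.vecMul (v i : Fin s → ℝ) A = A *ᵥ (v i : Fin s → ℝ) := by
        conv_lhs => rw [← hAsymm]
        exact Matrix.vecMul_transpose _ _
      have step3 : A *ᵥ (v i : Fin s → ℝ) = hA.eigenvalues i • (v i : Fin s → ℝ) :=
        hA.mulVec_eigenvectorBasis i
      rw [step1, step2, step3, smul_dotProduct, hdot, smul_eq_mul]
      congr 1
      show inner ℝ (v i) x = v.repr x i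
      rw [OrthonormalBasis.repr_apply_apply]
    have hxy : (x : Fin s → ℝ) ⬝ᵥ (y : Fin s → ℝ) = ∑ i, c i * (hA.eigenvalues i * c i) := by
      rw [hdot x y, ← LinearIsometryEquiv.inner_map_map v.repr x y]
      simp only [PiLp.inner_apply, RCLike.inner_apply, conj_trivial]
      exact Finset.sum_congr rfl fun i _ => by rw [hrepr_y i]; simp only [hc]; ring
    have hxx : (x : Fin s → ℝ) ⬝ᵥ (x : Fin s → ℝ) = ∑ i, c i * c i := by
      rw [hdot x x, ← LinearIsometryEquiv.inner_map_map v.repr x x]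
      simp only [PiLp.inner_apply, RCLike.inner_apply, conj_trivial]
      rfl
    have hRxRx : (R *ᵥ (x : Fin s → ℝ)) ⬝ᵥ (R *ᵥ (x : Fin s → ℝ))
        = (x : Fin s → ℝ) ⬝ᵥ (y : Fin s → ℝ) := by
      rw [hy, WithLp.ofLp_toLp, hAdef, Matrix.conjTranspose_eq_transpose_of_trivial, ← Matrix.mulVec_mulVec, Matrix.dotProduct_mulVec (x : Fin s → ℝ) Rᵀ,
        Matrix.vecMul_transpose]
    rw [hRxRx, hxy, hxx, Finset.mul_sum]
    apply Finset.sum_le_sum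
    intro i _
    by_cases hiS : i ∈ S
    · have h1 : lam ≤ hA.eigenvalues i := hge i hiS
      have h2 : (0:ℝ) ≤ c i * c i := mul_self_nonneg _
      calc lam * (c i * c i) ≤ hA.eigenvalues i * (c i * c i) :=
            mul_le_mul_of_nonneg_right h1 h2
        _ = c i * (hA.eigenvalues i * c i) := by ring
    · rw [hc0 i hiS]; simp

lemma schur_test {m n : ℕ} (hm : 0 < m) (hn : 0 < n) (A : Matrix (Fin m) (Fin n) ℝ)
    (x : Fin n → ℝ) :
    ∑ i, ((A *ᵥ x) i) ^ 2 ≤ (colSumNorm A * rowSumNorm A) * ∑ k, (x k) ^ 2 := by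
  haveI : Nonempty (Fin m) := ⟨⟨0, hm⟩⟩
  haveI : Nonempty (Fin n) := ⟨⟨0, hn⟩⟩
  have hcol : ∀ k, ∑ i, |A i k| ≤ colSumNorm A := fun k =>
    le_ciSup (f := fun k : Fin n => ∑ i, |A i k|)
      (Set.Finite.bddAbove (Set.finite_range _)) k
  have hrow : ∀ i, ∑ k, |A i k| ≤ rowSumNorm A := fun i =>
    le_ciSup (f := fun i : Fin m => ∑ k, |A i k|)
      (Set.Finite.bddAbove (Set.finite_range _)) i
  have hrow0 : 0 ≤ rowSumNorm A := by
    refine le_trans ?_ (hrow (Classical.arbitrary _))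
    exact Finset.sum_nonneg fun k _ => abs_nonneg _
  have hcol0 : 0 ≤ colSumNorm A := by
    refine le_trans ?_ (hcol (Classical.arbitrary _))
    exact Finset.sum_nonneg fun i _ => abs_nonneg _
  have step1 : ∀ i, ((A *ᵥ x) i) ^ 2 ≤ rowSumNorm A * ∑ k, |A i k| * (x k) ^ 2 := by
    intro i
    have h1 : ((A *ᵥ x) i) ^ 2 ≤ (∑ k, |A i k| * |x k|) ^ 2 := by
      rw [← sq_abs]
      apply pow_le_pow_left₀ (abs_nonneg _)
      calc |(A *ᵥ x) i| = |∑ k, A i k * x k| := by rw [Matrix.mulVec, dotProduct]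
        _ ≤ ∑ k, |A i k * x k| := Finset.abs_sum_le_sum_abs _ _
        _ = ∑ k, |A i k| * |x k| := by simp [abs_mul]
    have h2 : (∑ k, |A i k| * |x k|) ^ 2 ≤ (∑ k, |A i k|) * ∑ k, |A i k| * (x k) ^ 2 := by
      have := Finset.sum_mul_sq_le_sq_mul_sq Finset.univ
        (fun k => Real.sqrt |A i k|) (fun k => Real.sqrt |A i k| * |x k|)
      have e1 : ∀ k : Fin n, Real.sqrt |A i k| * (Real.sqrt |A i k| * |x k|)
          = |A i k| * |x k| := by
        intro k; rw [← mul_assoc, Real.mul_self_sqrt (abs_nonneg _)]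
      have e2 : ∀ k : Fin n, (Real.sqrt |A i k|) ^ 2 = |A i k| := fun k =>
        Real.sq_sqrt (abs_nonneg _)
      have e3 : ∀ k : Fin n, (Real.sqrt |A i k| * |x k|) ^ 2 = |A i k| * (x k) ^ 2 := by
        intro k; rw [mul_pow, e2, sq_abs]
      simp only [e1, e2, e3] at this
      exact this
    have h3 : (∑ k, |A i k|) * (∑ k, |A i k| * (x k) ^ 2)
        ≤ rowSumNorm A * ∑ k, |A i k| * (x k) ^ 2 := by
      apply mul_le_mul_of_nonneg_right (hrow i)
      exact Finset.sum_nonneg fun k _ => mul_nonneg (abs_nonneg _) (sq_nonneg _)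
    exact le_trans h1 (le_trans h2 h3)
  calc ∑ i, ((A *ᵥ x) i) ^ 2 ≤ ∑ i, rowSumNorm A * ∑ k, |A i k| * (x k) ^ 2 :=
        Finset.sum_le_sum fun i _ => step1 i
    _ = rowSumNorm A * ∑ k, (∑ i, |A i k|) * (x k) ^ 2 := by
        rw [← Finset.mul_sum, Finset.sum_comm]
        congr 1
        exact Finset.sum_congr rfl fun k _ => by rw [Finset.sum_mul]
    _ ≤ rowSumNorm A * ∑ k, colSumNorm A * (x k) ^ 2 := by
        apply mul_le_mul_of_nonneg_left _ hrow0
        exact Finset.sum_le_sum fun k _ =>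
          mul_le_mul_of_nonneg_right (hcol k) (sq_nonneg _)
    _ = (colSumNorm A * rowSumNorm A) * ∑ k, (x k) ^ 2 := by
        rw [← Finset.mul_sum]; ring

open Matrix in
lemma sv_le (s j : ℕ) (hj : j < s) (R : Matrix (Fin s) (Fin s) ℝ) (B : ℝ)
    (h : ∀ x : Fin s → ℝ, (∀ u : Fin s, (u : ℕ) < j → (R *ᵥ x) u = 0) →
      (R *ᵥ x) ⬝ᵥ (R *ᵥ x) ≤ B * (x ⬝ᵥ x)) :
    singularValue R ⟨j, hj⟩ ≤ Real.sqrt B := by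
  obtain ⟨x, hx0, hxz, hxle⟩ := key_exists s j hj R
  have hpos : 0 < (x : Fin s → ℝ) ⬝ᵥ (x : Fin s → ℝ) := by
    rcases lt_or_eq_of_le (Finset.sum_nonneg fun k _ =>
      mul_self_nonneg ((x : Fin s → ℝ) k) : (0:ℝ) ≤ (x : Fin s → ℝ) ⬝ᵥ (x : Fin s → ℝ)) with h1 | h1
    · exact h1
    · exfalso; apply hx0
      have := dotProduct_self_eq_zero.mp h1.symm
      simpa using this
  have hB := h (x : Fin s → ℝ) hxz
  have hlamB := le_of_mul_le_mul_right (le_trans hxle hB) hpos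
  unfold singularValue
  exact Real.sqrt_le_sqrt hlamB


/-- let `R ∈ ℝ^{s×s}` be upper triangular with entries satisfying
`|r_{ik}| ≤ C_i · M_i · ΔT^i` for `k ≥ i` (0-indexed rows, so row `i` corresponds to
row `j = i+1` in the paper with bound `C_j M_{j-1} (ΔT)^{j-1}`), with nonnegative constants
and `0 < ΔT`. Then the `(j+1)`-th largest singular value of `R` satisfies
`σ_{j+1} ≤ √(s−j) · √(‖R_j‖_1 ‖R_j‖_∞)`, where `R_j` is `R` with the first `j` rows removed,
and in particular `σ_{j+1} ≤ √(s−j) · s · max_{i>j} C_i M_{i-1} (ΔT)^{i-1}`. -/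
theorem stmt5 (s j : ℕ) (hj1 : 1 ≤ j) (hj2 : j ≤ s - 1)
    (R : Matrix (Fin s) (Fin s) ℝ) (C M : Fin s → ℝ) (ΔT : ℝ) (hΔT : 0 < ΔT)
    (hC : ∀ i, 0 ≤ C i) (hM : ∀ i, 0 ≤ M i)
    (hR : ∀ i k : Fin s, k < i → R i k = 0)
    (hbound : ∀ i k : Fin s, i ≤ k → |R i k| ≤ C i * M i * ΔT ^ (i : ℕ)) :
    singularValue R ⟨j, by omega⟩ ≤
        Real.sqrt (s - j : ℕ) *
          Real.sqrt
            (colSumNorm (R.submatrix (fun i : Fin (s - j) => (⟨j + i.1, by omega⟩ : Fin s)) id) *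
             rowSumNorm (R.submatrix (fun i : Fin (s - j) => (⟨j + i.1, by omega⟩ : Fin s)) id)) ∧
      singularValue R ⟨j, by omega⟩ ≤
        Real.sqrt (s - j : ℕ) * s *
          ⨆ i : {i : Fin s // j ≤ (i : ℕ)}, C i * M i * ΔT ^ (i.1 : ℕ) := by
  have hs2 : 2 ≤ s := by omega
  have hjs : j < s := by omega
  haveI : Nonempty (Fin s) := ⟨⟨0, by omega⟩⟩
  haveI : Nonempty (Fin (s - j)) := ⟨⟨0, by omega⟩⟩
  set Rj : Matrix (Fin (s - j)) (Fin s) ℝ :=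
    R.submatrix (fun i : Fin (s - j) => (⟨j + i.1, by omega⟩ : Fin s)) id with hRjdef
  set cR := colSumNorm Rj with hcR
  set rR := rowSumNorm Rj with hrR
  -- the quadratic form bound
  have h : ∀ x : Fin s → ℝ, (∀ u : Fin s, (u : ℕ) < j → (R *ᵥ x) u = 0) →
      (R *ᵥ x) ⬝ᵥ (R *ᵥ x) ≤ (cR * rR) * (x ⬝ᵥ x) := by
    intro x hx
    have e0 : (R *ᵥ x) ⬝ᵥ (R *ᵥ x) = ∑ u, ((R *ᵥ x) u) ^ 2 := by
      simp [dotProduct, sq]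
    have exx : x ⬝ᵥ x = ∑ k, (x k) ^ 2 := by
      simp [dotProduct, sq]
    set em : Fin (s - j) → Fin s := fun i => (⟨j + i.1, by omega⟩ : Fin s) with hem
    have heminj : Function.Injective em := by
      intro i i' hii
      have := congrArg Fin.val hii
      simp only [hem] at this
      ext; omega
    have h1 : ∑ u : Fin s, ((R *ᵥ x) u) ^ 2
        = ∑ u ∈ Finset.image em Finset.univ, ((R *ᵥ x) u) ^ 2 := by
      refine (Finset.sum_subset (Finset.subset_univ _) ?_).symm
      intro u _ hu
      have hu' : (u : ℕ) < j := by
        by_contra hge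
        apply hu
        rw [Finset.mem_image]
        exact ⟨⟨u.1 - j, by omega⟩, Finset.mem_univ _, by ext; simp [hem]; omega⟩
      rw [hx u hu']
      simp
    have h2 : ∑ u ∈ Finset.image em Finset.univ, ((R *ᵥ x) u) ^ 2
        = ∑ i : Fin (s - j), ((Rj *ᵥ x) i) ^ 2 := by
      rw [Finset.sum_image (fun i _ i' _ hii => heminj hii)]
      rfl
    rw [e0, exx, h1, h2]
    exact schur_test (by omega) (by omega) Rj x
  have key1 : singularValue R ⟨j, hjs⟩ ≤ Real.sqrt (cR * rR) :=
    sv_le s j hjs R (cR * rR) h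
  have hsq1 : (1 : ℝ) ≤ Real.sqrt ((s - j : ℕ) : ℝ) := by
    rw [show (1:ℝ) = Real.sqrt 1 from (Real.sqrt_one).symm]
    apply Real.sqrt_le_sqrt
    have : (1 : ℕ) ≤ s - j := by omega
    exact_mod_cast this
  constructor
  · exact key1.trans (le_mul_of_one_le_left (Real.sqrt_nonneg _) hsq1)
  · -- second bound
    haveI : Nonempty {i : Fin s // j ≤ (i : ℕ)} := ⟨⟨⟨j, hjs⟩, le_refl j⟩⟩
    set K := ⨆ i : {i : Fin s // j ≤ (i : ℕ)}, C i * M i * ΔT ^ (i.1 : ℕ) with hKdef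
    have hKb : ∀ i : {i : Fin s // j ≤ (i : ℕ)}, C i * M i * ΔT ^ (i.1 : ℕ) ≤ K := fun i =>
      le_ciSup (f := fun i : {i : Fin s // j ≤ (i : ℕ)} => C i * M i * ΔT ^ (i.1 : ℕ))
        (Set.Finite.bddAbove (Set.finite_range _)) i
    have hK0 : 0 ≤ K := by
      refine le_trans ?_ (hKb ⟨⟨j, hjs⟩, le_refl j⟩)
      exact mul_nonneg (mul_nonneg (hC _) (hM _)) (pow_nonneg hΔT.le _)
    have hentry : ∀ (i : Fin (s - j)) (k : Fin s), |Rj i k| ≤ K := by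
      intro i k
      by_cases hcase : (k : ℕ) < j + i.1
      · have hz : R (⟨j + i.1, by omega⟩ : Fin s) k = 0 := by
          apply hR
          rw [Fin.lt_def]
          exact hcase
        have : Rj i k = 0 := hz
        rw [this, abs_zero]
        exact hK0
      · have hle : (⟨j + i.1, by omega⟩ : Fin s) ≤ k := by
          rw [Fin.le_def]; simp; omega
        have hb := hbound (⟨j + i.1, by omega⟩ : Fin s) k hle
        refine le_trans hb ?_
        exact hKb ⟨⟨j + i.1, by omega⟩, by simp⟩
    have hrR0 : 0 ≤ rR := by
      rw [hrR]
      refine le_trans ?_ (le_ciSup (f := fun i : Fin (s - j) => ∑ k, |Rj i k|)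
        (Set.Finite.bddAbove (Set.finite_range _)) (Classical.arbitrary _))
      exact Finset.sum_nonneg fun k _ => abs_nonneg _
    have hsK0 : (0:ℝ) ≤ (s : ℝ) * K := mul_nonneg (by positivity) hK0
    have hcle : cR ≤ (s : ℝ) * K := by
      rw [hcR]
      apply ciSup_le
      intro k
      calc ∑ i, |Rj i k| ≤ ∑ _i : Fin (s - j), K := Finset.sum_le_sum fun i _ => hentry i k
        _ = ((s - j : ℕ) : ℝ) * K := by
            rw [Finset.sum_const, Finset.card_univ, Fintype.card_fin, nsmul_eq_mul]
        _ ≤ (s : ℝ) * K := by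
            apply mul_le_mul_of_nonneg_right _ hK0
            exact_mod_cast Nat.sub_le s j
    have hrle : rR ≤ (s : ℝ) * K := by
      rw [hrR]
      apply ciSup_le
      intro i
      calc ∑ k, |Rj i k| ≤ ∑ _k : Fin s, K := Finset.sum_le_sum fun k _ => hentry i k
        _ = (s : ℝ) * K := by
            rw [Finset.sum_const, Finset.card_univ, Fintype.card_fin, nsmul_eq_mul]
    have hsqrt : Real.sqrt (cR * rR) ≤ (s : ℝ) * K := by
      calc Real.sqrt (cR * rR) ≤ Real.sqrt (((s : ℝ) * K) * ((s : ℝ) * K)) :=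
            Real.sqrt_le_sqrt (mul_le_mul hcle hrle hrR0 hsK0)
        _ = (s : ℝ) * K := Real.sqrt_mul_self hsK0
    calc singularValue R ⟨j, hjs⟩ ≤ Real.sqrt (cR * rR) := key1
      _ ≤ (s : ℝ) * K := hsqrt
      _ ≤ Real.sqrt ((s - j : ℕ) : ℝ) * ((s : ℝ) * K) :=
          le_mul_of_one_le_left hsK0 hsq1
      _ = Real.sqrt ((s - j : ℕ) : ℝ) * (s : ℝ) * K := by ring
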